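/- arXiv:1709.09640 — 6 statements merged into one kernel-verified Lean document; each statement's English description precedes it below -/
import Mathlib

section
/- Let K be a field, E an algebraic field extension of K, and Ω an algebraic closure of E. Let α ∈ E. If for every intermediate field L of K(α)/K with α ∉ L there exist two L-algebra homomorphisms φ, ψ : E → Ω such that φ(α) ≠ ψ(α), then α is separable over K (i.e., the minimal polynomial of α over K has distinct roots in Ω). -/
/-- If for every intermediate field `L` of `K(α)/K` with `α ∉ L` there exist two
`L`-algebra homomorphisms `φ ψ : E → Ω` with `φ α ≠ ψ α`, then `α` is separable over `K`. -/
theorem stmt_1 {K E Ω : Type*} [Field K] [Field E] [Field Ω]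
    [Algebra K E] [Algebra K Ω] [Algebra E Ω] [IsScalarTower K E Ω]
    [Algebra.IsAlgebraic K E] [IsAlgClosure E Ω] (α : E)
    (h : ∀ L : IntermediateField K E, L ≤ IntermediateField.adjoin K {α} → α ∉ L →
      ∃ φ ψ : E →ₐ[L] Ω, φ α ≠ ψ α) :
    IsSeparable K α := by
  set q := ringExpChar K with hq
  haveI : ExpChar K q := ringExpChar.expChar K
  haveI : ExpChar (separableClosure K E) q :=
    expChar_of_injective_algebraMap (algebraMap K (separableClosure K E)).injective q
  haveI : ExpChar Ω q :=
    expChar_of_injective_algebraMap (algebraMap K Ω).injective q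
  obtain ⟨n, y, hy⟩ := IsPurelyInseparable.pow_mem (separableClosure K E) q α
  set L : IntermediateField K E := separableClosure K E ⊓ IntermediateField.adjoin K {α}
    with hLdef
  have hpow : α ^ q ^ n ∈ L := by
    refine ⟨hy ▸ y.2, pow_mem (IntermediateField.mem_adjoin_simple_self K α) _⟩
  have hmem : α ∈ L := by
    by_contra hmem
    obtain ⟨φ, ψ, hne⟩ := h L inf_le_right hmem
    have hcomm : ∀ χ : E →ₐ[L] Ω, χ α ^ q ^ n = algebraMap L Ω ⟨α ^ q ^ n, hpow⟩ := by
      intro χ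
      rw [← map_pow]
      exact (χ.commutes ⟨α ^ q ^ n, hpow⟩).symm ▸ rfl
    have key : φ α ^ q ^ n = ψ α ^ q ^ n := by rw [hcomm φ, hcomm ψ]
    exact hne ((iterateFrobenius Ω q n).injective (by
      simpa only [iterateFrobenius_def] using key))
  exact hmem.1
end

section
/- Let K be a field, E an algebraic field extension of K, Ω an algebraic closure of E, and α ∈ E. Then α is separable over K if and only if for every intermediate field L of E/K with α ∉ L there exist two L-algebra homomorphisms φ, ψ : E → Ω such that φ(α) ≠ ψ(α). -/
/-- `α ∈ E` is separable over `K` iff for every intermediate field `L` of `E/K` with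
`α ∉ L` there exist two `L`-algebra homomorphisms `φ ψ : E → Ω` with `φ α ≠ ψ α`. -/
theorem stmt_2 {K E Ω : Type*} [Field K] [Field E] [Field Ω]
    [Algebra K E] [Algebra K Ω] [Algebra E Ω] [IsScalarTower K E Ω]
    [Algebra.IsAlgebraic K E] [IsAlgClosure E Ω] (α : E) :
    IsSeparable K α ↔
      ∀ L : IntermediateField K E, α ∉ L → ∃ φ ψ : E →ₐ[L] Ω, φ α ≠ ψ α := by
  haveI : IsAlgClosed Ω := IsAlgClosure.isAlgClosed E
  constructor
  · intro hsep L hαL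
    haveI : Algebra.IsAlgebraic L E := Algebra.IsAlgebraic.tower_top (K := K) L
    have hint : IsIntegral L α := Algebra.IsIntegral.isIntegral α
    have hsepL : IsSeparable L α := IsSeparable.tower_top L hsep
    -- the minimal polynomial of α over L has at least two roots in Ω
    have hdeg : 2 ≤ (minpoly L α).natDegree := by
      rw [minpoly.two_le_natDegree_iff hint]
      rintro ⟨⟨y, hy⟩, rfl⟩
      exact hαL hy
    have hsplits : Polynomial.Splits ((minpoly L α).map (algebraMap L Ω)) :=
      IsAlgClosed.splits _
    have hcard : 2 ≤ Fintype.card ((minpoly L α).rootSet Ω) := by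
      rw [Polynomial.card_rootSet_eq_natDegree hsepL hsplits]
      exact hdeg
    -- the image of α in Ω is a root; pick a different root β
    have hαroot : algebraMap E Ω α ∈ (minpoly L α).rootSet Ω := by
      rw [Polynomial.mem_rootSet]
      refine ⟨minpoly.ne_zero hint, ?_⟩
      exact (Polynomial.aeval_algebraMap_apply Ω α _).trans
        (by rw [minpoly.aeval, map_zero])
    obtain ⟨β, hβne⟩ := Fintype.exists_ne_of_one_lt_card hcard ⟨_, hαroot⟩
    have hK' : ∀ s : E, IsIntegral L s ∧
        Polynomial.Splits ((minpoly L s).map (algebraMap L Ω)) :=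
      fun s ↦ ⟨Algebra.IsIntegral.isIntegral s, IsAlgClosed.splits _⟩
    obtain ⟨φ, hφ⟩ := IntermediateField.exists_algHom_of_splits_of_aeval hK'
      ((Polynomial.mem_rootSet.1 β.2).2)
    refine ⟨φ, IsScalarTower.toAlgHom L E Ω, ?_⟩
    rw [hφ]
    intro h
    exact hβne (Subtype.ext (by simpa using h))
  · intro h
    by_contra hsep
    have hαL : α ∉ separableClosure K E := fun hα ↦ hsep (mem_separableClosure_iff.1 hα)
    obtain ⟨φ, ψ, hφψ⟩ := h (separableClosure K E) hαL
    haveI : IsPurelyInseparable (separableClosure K E) E :=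
      separableClosure.isPurelyInseparable K E
    exact hφψ (Subsingleton.elim φ ψ ▸ rfl)
end

section
/- Let K be a field, E a separable algebraic field extension of K, and Ω an algebraic closure of E. Let L₁ and L₂ be intermediate fields of E/K. Then L₁ ⊆ L₂ if and only if for every pair of K-algebra homomorphisms φ, ψ : E → Ω, if φ and ψ agree on L₂ then φ and ψ agree on L₁. -/
/-- For a separable algebraic extension `E/K` with intermediate fields `L₁, L₂`:
`L₁ ⊆ L₂` iff every pair of `K`-algebra homomorphisms `E → Ω` agreeing on `L₂`
also agrees on `L₁`. -/
theorem stmt_3 {K E Ω : Type*} [Field K] [Field E] [Field Ω]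
    [Algebra K E] [Algebra K Ω] [Algebra E Ω] [IsScalarTower K E Ω]
    [Algebra.IsAlgebraic K E] [Algebra.IsSeparable K E] [IsAlgClosure E Ω]
    (L₁ L₂ : IntermediateField K E) :
    L₁ ≤ L₂ ↔
      ∀ φ ψ : E →ₐ[K] Ω, (∀ x ∈ L₂, φ x = ψ x) → ∀ x ∈ L₁, φ x = ψ x := by
  constructor
  · intro h φ ψ hagree x hx
    exact hagree x (h hx)
  · intro h x hx
    by_contra hxL₂
    have : Algebra.IsSeparable L₂ E := Algebra.isSeparable_tower_top_of_isSeparable K L₂ E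
    have hac : IsAlgClosed Ω := IsAlgClosure.isAlgClosed E
    have hint : IsIntegral L₂ x := Algebra.IsIntegral.isIntegral x
    have hsep : (minpoly L₂ x).Separable := Algebra.IsSeparable.isSeparable L₂ x
    have hdeg : 2 ≤ (minpoly L₂ x).natDegree := by
      rw [minpoly.two_le_natDegree_iff hint]
      rintro ⟨⟨z, hz⟩, rfl⟩
      exact hxL₂ hz
    have hsplits : ((minpoly L₂ x).map (algebraMap L₂ Ω)).Splits := IsAlgClosed.splits _
    have hcard : 2 ≤ Fintype.card ((minpoly L₂ x).rootSet Ω) := by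
      rw [Polynomial.card_rootSet_eq_natDegree hsep hsplits]
      exact hdeg
    have hmem : algebraMap E Ω x ∈ (minpoly L₂ x).rootSet Ω := by
      rw [Polynomial.mem_rootSet]
      refine ⟨minpoly.ne_zero hint, ?_⟩
      have := minpoly.aeval L₂ x
      have h2 : Polynomial.aeval (algebraMap E Ω x) (minpoly L₂ x) =
          algebraMap E Ω (Polynomial.aeval x (minpoly L₂ x)) := by
        rw [Polynomial.aeval_algebraMap_apply]
      rw [h2, this, map_zero]
    obtain ⟨⟨y, hy⟩, hyne⟩ := Fintype.exists_ne_of_one_lt_card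
      (one_lt_two.trans_le hcard)
      (⟨algebraMap E Ω x, hmem⟩ : (minpoly L₂ x).rootSet Ω)
    have hyroot : Polynomial.aeval y (minpoly L₂ x) = 0 :=
      (Polynomial.mem_rootSet.mp hy).2
    obtain ⟨ψ, hψx⟩ := IntermediateField.exists_algHom_of_splits_of_aeval
      (F := L₂) (K := Ω)
      (fun s ↦ ⟨Algebra.IsIntegral.isIntegral s, IsAlgClosed.splits _⟩) hyroot
    have := h (((IsScalarTower.toAlgHom L₂ E Ω)).restrictScalars K)
      (ψ.restrictScalars K) (fun z hz ↦ ?_) x hx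
    · apply hyne
      ext
      simp only [AlgHom.coe_restrictScalars', IsScalarTower.coe_toAlgHom'] at this
      show y = algebraMap E Ω x
      rw [← hψx]
      exact this.symm
    · simp only [AlgHom.coe_restrictScalars', IsScalarTower.coe_toAlgHom']
      have : z = algebraMap L₂ E ⟨z, hz⟩ := rfl
      rw [this, ψ.commutes, ← IsScalarTower.algebraMap_apply]
end

section
/- Let K be a field, E an algebraic field extension of K, and Ω an algebraic closure of E. Suppose that for all intermediate fields L₁, L₂ of E/K, the inclusion L₁ ⊆ L₂ holds if and only if every pair of K-algebra homomorphisms φ, ψ : E → Ω that agree on L₂ also agree on L₁. Then E/K is separable. -/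
/-- If for all intermediate fields `L₁, L₂` of `E/K`, `L₁ ⊆ L₂` holds iff every pair
of `K`-algebra homomorphisms `E → Ω` agreeing on `L₂` agrees on `L₁`, then `E/K`
is separable. -/
theorem stmt_4 {K E Ω : Type*} [Field K] [Field E] [Field Ω]
    [Algebra K E] [Algebra K Ω] [Algebra E Ω] [IsScalarTower K E Ω]
    [Algebra.IsAlgebraic K E] [IsAlgClosure E Ω]
    (h : ∀ L₁ L₂ : IntermediateField K E,
      L₁ ≤ L₂ ↔
        ∀ φ ψ : E →ₐ[K] Ω, (∀ x ∈ L₂, φ x = ψ x) → ∀ x ∈ L₁, φ x = ψ x) :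
    Algebra.IsSeparable K E := by
  set L := separableClosure K E with hL
  have hpi : IsPurelyInseparable L E := separableClosure.isPurelyInseparable K E
  have htop : (⊤ : IntermediateField K E) ≤ L := by
    rw [h ⊤ L]
    intro φ ψ hagree x _
    have : (φ : E →+* Ω).comp (algebraMap L E) = (ψ : E →+* Ω).comp (algebraMap L E) := by
      ext y
      exact hagree y y.2
    have := IsPurelyInseparable.injective_comp_algebraMap L E Ω this
    exact congrFun (congrArg (fun f : E →+* Ω => (f : E → Ω)) this) x
  rw [← separableClosure.eq_top_iff, ← hL, eq_top_iff]
  exact htop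
end

section
/- Let K be a field, E a separable algebraic field extension of K, Ω an algebraic closure of E, and α, β ∈ E. Then α ∈ K(β) if and only if for every pair of K-algebra homomorphisms φ, ψ : E → Ω, φ(β) = ψ(β) implies φ(α) = ψ(α). -/
/-- For a separable algebraic extension `E/K` and `α, β ∈ E`: `α ∈ K(β)` iff for every
pair of `K`-algebra homomorphisms `φ ψ : E → Ω`, `φ β = ψ β` implies `φ α = ψ α`. -/
theorem stmt_5 {K E Ω : Type*} [Field K] [Field E] [Field Ω]
    [Algebra K E] [Algebra K Ω] [Algebra E Ω] [IsScalarTower K E Ω]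
    [Algebra.IsAlgebraic K E] [Algebra.IsSeparable K E] [IsAlgClosure E Ω]
    (α β : E) :
    α ∈ IntermediateField.adjoin K {β} ↔
      ∀ φ ψ : E →ₐ[K] Ω, φ β = ψ β → φ α = ψ α := by
  constructor
  · intro hα φ ψ hβ
    have h1 : (IntermediateField.adjoin K {β}).toSubalgebra =
        Algebra.adjoin K {β} :=
      IntermediateField.adjoin_simple_toSubalgebra_of_isAlgebraic
        (Algebra.IsAlgebraic.isAlgebraic β)
    have h2 : Algebra.adjoin K {β} ≤ AlgHom.equalizer φ ψ := by
      rw [Algebra.adjoin_le_iff]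
      simpa using hβ
    have : α ∈ Algebra.adjoin K {β} := by
      rw [← h1] at *; exact hα
    exact h2 this
  · intro h
    by_contra hα
    set L := IntermediateField.adjoin K {β} with hL
    haveI : Algebra.IsSeparable L E := Algebra.isSeparable_tower_top_of_isSeparable K L E
    haveI : Algebra.IsAlgebraic L E := Algebra.IsAlgebraic.tower_top (K := K) L
    haveI : IsAlgClosed Ω := IsAlgClosure.isAlgClosed E
    -- minpoly L α
    have hint : IsIntegral L α := Algebra.IsIntegral.isIntegral α
    have hsep : (minpoly L α).Separable := Algebra.IsSeparable.isSeparable L α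
    have hdeg : 2 ≤ (minpoly L α).natDegree := by
      by_contra hd
      push_neg at hd
      have h1 := minpoly.natDegree_pos hint
      have hdd : (minpoly L α).natDegree = 1 := by omega
      obtain ⟨x, hx⟩ := minpoly.natDegree_eq_one_iff.mp hdd
      exact hα (hx ▸ x.2)
    -- two distinct roots of minpoly L α in Ω
    have hsplit : ((minpoly L α).map (algebraMap L Ω)).Splits :=
      IsAlgClosed.splits _
    have hcard : Fintype.card ((minpoly L α).rootSet Ω) = (minpoly L α).natDegree :=
      Polynomial.card_rootSet_eq_natDegree hsep hsplit
    have hroot : algebraMap E Ω α ∈ (minpoly L α).rootSet Ω := by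
      rw [Polynomial.mem_rootSet]
      refine ⟨minpoly.ne_zero hint, ?_⟩
      rw [Polynomial.aeval_algebraMap_apply, minpoly.aeval, map_zero]
    obtain ⟨⟨γ, hγ⟩, hγne⟩ := Fintype.exists_ne_of_one_lt_card
      (by rw [hcard]; omega) (⟨algebraMap E Ω α, hroot⟩ : (minpoly L α).rootSet Ω)
    have hγ0 : Polynomial.aeval γ (minpoly L α) = 0 :=
      (Polynomial.mem_rootSet.mp hγ).2
    obtain ⟨φ, hφ⟩ := IntermediateField.exists_algHom_of_splits_of_aeval
      (fun s : E ↦ ⟨Algebra.IsIntegral.isIntegral s, IsAlgClosed.splits _⟩) hγ0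
    have hβL : β ∈ L := IntermediateField.mem_adjoin_simple_self K β
    have hβeq : (φ.restrictScalars K) β = (IsScalarTower.toAlgHom K E Ω) β := by
      have hb : β = algebraMap L E ⟨β, hβL⟩ := rfl
      show φ β = algebraMap E Ω β
      rw [hb, AlgHom.commutes, IsScalarTower.algebraMap_apply L E Ω]
    have key := h (φ.restrictScalars K) (IsScalarTower.toAlgHom K E Ω) hβeq
    have hφα : (φ.restrictScalars K) α = γ := hφ
    rw [hφα] at key
    exact hγne (Subtype.ext key)
end

section
/- Let K be a field, E an algebraic field extension of K, and Ω an algebraic closure of E. Then E/K is separable if and only if for every proper intermediate field L of E/K (i.e., L ≠ E) there exist two distinct L-algebra homomorphisms from E to Ω. -/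
/-- An algebraic extension `E/K` is separable iff for every proper intermediate field `L`
of `E/K` there exist two distinct `L`-algebra homomorphisms from `E` to `Ω`. -/
theorem stmt_6 {K E Ω : Type*} [Field K] [Field E] [Field Ω]
    [Algebra K E] [Algebra K Ω] [Algebra E Ω] [IsScalarTower K E Ω]
    [Algebra.IsAlgebraic K E] [IsAlgClosure E Ω] :
    Algebra.IsSeparable K E ↔
      ∀ L : IntermediateField K E, L ≠ ⊤ → ∃ φ ψ : E →ₐ[L] Ω, φ ≠ ψ := by
  have halgΩ : IsAlgClosed Ω := IsAlgClosure.isAlgClosed E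
  constructor
  · intro hsep L hL
    have : Algebra.IsSeparable L E := Algebra.isSeparable_tower_top_of_isSeparable K L E
    have : Algebra.IsAlgebraic L E := Algebra.IsAlgebraic.tower_top (K := K) L
    by_contra hcon
    push_neg at hcon
    have hsub : Subsingleton (E →ₐ[L] Ω) := ⟨hcon⟩
    have hne : Nonempty (E →ₐ[L] Ω) := ⟨IsScalarTower.toAlgHom L E Ω⟩
    have h1 : Nat.card (E →ₐ[L] Ω) = 1 := Nat.card_eq_one_iff_unique.2 ⟨hsub, hne⟩
    have hfin : Field.finSepDegree L E = 1 := by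
      rw [Field.finSepDegree_eq_of_isAlgClosed L E Ω, h1]
    have : IsPurelyInseparable L E := isPurelyInseparable_of_finSepDegree_eq_one hfin
    exact hL (top_unique fun x _ ↦ by
      obtain ⟨y, hy⟩ := IsPurelyInseparable.surjective_algebraMap_of_isSeparable L E x
      exact hy ▸ y.2)
  · intro h
    rw [← separableClosure.eq_top_iff]
    by_contra hL
    obtain ⟨φ, ψ, hne⟩ := h (separableClosure K E) hL
    exact hne (Subsingleton.elim φ ψ)
end
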